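/- arXiv:math/0404311 — 3 statements merged into one kernel-verified Lean document; each statement's English description precedes it below -/
import Mathlib

section
/- Define b₀ = (c₁c₂⋯c_{2h}) · c_{2h+1} · (c₁c₂⋯c_{2h})⁻¹. Then for every integer m with 1 ≤ m ≤ h−1, the product (c_{2m+2}c_{2m+3}⋯c_{2h}c_{2h+1}) · (c_{2m}c_{2m−1}⋯c₂c₁) · b₀ · (c_{2h+1}c_{2h}⋯c_{2m+2}) · (c₁c₂⋯c_{2m}) · c_{2m+1} is equal to (c_{2m}c_{2m−1}⋯c₂c₁) · (c₁c₂⋯c_{2h}c_{2h+1}) · (c_{2h+1}c_{2h}⋯c_{2m+2}c_{2m+1}). -/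
/-- The ascending product `c a * c (a+1) * ⋯ * c b`. -/
def ascProd {G : Type*} [Group G] (c : ℕ → G) (a b : ℕ) : G :=
  ((List.range' a (b + 1 - a)).map c).prod

/-- The descending product `c b * c (b-1) * ⋯ * c a`. -/
def descProd {G : Type*} [Group G] (c : ℕ → G) (a b : ℕ) : G :=
  (((List.range' a (b + 1 - a)).reverse).map c).prod

section Aux

variable {G : Type*} [Group G]

lemma ascProd_append (c : ℕ → G) {a t b : ℕ} (h1 : a ≤ t + 1) (h2 : t ≤ b) :
    ascProd c a t * ascProd c (t + 1) b = ascProd c a b := by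
  unfold ascProd
  rw [← List.prod_append, ← List.map_append]
  congr 1
  have H := @List.range'_append a (t + 1 - a) (b + 1 - (t + 1)) 1
  rw [show a + 1 * (t + 1 - a) = t + 1 by omega,
    show (t + 1 - a) + (b + 1 - (t + 1)) = b + 1 - a by omega] at H
  rw [H]

lemma ascProd_single (c : ℕ → G) (a : ℕ) : ascProd c a a = c a := by
  simp [ascProd, show a + 1 - a = 1 by omega]

lemma ascProd_concat (c : ℕ → G) {a b : ℕ} (h : a ≤ b + 1) :
    ascProd c a (b + 1) = ascProd c a b * c (b + 1) := by
  rw [← ascProd_append c h (Nat.le_succ b), ascProd_single]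

lemma descProd_cons (c : ℕ → G) {a b : ℕ} (h : a ≤ b) :
    descProd c a b = descProd c (a + 1) b * c a := by
  unfold descProd
  rw [show b + 1 - a = (b + 1 - (a + 1)) + 1 by omega, List.range'_succ,
    List.reverse_cons, List.map_append, List.prod_append]
  simp

lemma commute_lists (c : ℕ → G) {l1 l2 : List ℕ}
    (H : ∀ x ∈ l1, ∀ y ∈ l2, c x * c y = c y * c x) :
    (l1.map c).prod * (l2.map c).prod = (l2.map c).prod * (l1.map c).prod := by
  refine (Commute.list_prod_left _ _ fun x hx =>
    Commute.list_prod_right _ _ fun y hy => ?_).eq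
  obtain ⟨i, hi, rfl⟩ := List.mem_map.1 hx
  obtain ⟨j, hj, rfl⟩ := List.mem_map.1 hy
  exact H i hi j hj

lemma abstract_identity (U V δ U' P W k : G)
    (hUV : U * V = V * U) (hUδ : U * δ = δ * U')
    (hWP : W * P = P * W) :
    U * V * (δ * (P * U')⁻¹) * W * P * k = V * δ * (W * k) := by
  simp only [mul_inv_rev, mul_assoc]
  rw [← mul_assoc U V, hUV, mul_assoc, ← mul_assoc U δ, hUδ, mul_assoc]
  rw [← mul_assoc U' U'⁻¹, mul_inv_cancel, one_mul]
  rw [← mul_assoc W P, hWP, mul_assoc, ← mul_assoc P⁻¹ P, inv_mul_cancel, one_mul]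

variable (h : ℕ) (c : ℕ → G)
    (braid : ∀ j, 1 ≤ j → j ≤ 2 * h → c j * c (j + 1) * c j = c (j + 1) * c j * c (j + 1))
    (comm : ∀ j l, 1 ≤ j → j ≤ 2 * h + 1 → 1 ≤ l → l ≤ 2 * h + 1 →
      (j + 2 ≤ l ∨ l + 2 ≤ j) → c j * c l = c l * c j)

include braid comm in
lemma shift_lemma : ∀ b j, 1 ≤ j → j + 1 ≤ b → b ≤ 2 * h + 1 →
    ascProd c 1 b * c j = c (j + 1) * ascProd c 1 b := by
  intro b
  induction b with
  | zero => intro j h1 h2 h3; omega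
  | succ b ih =>
    intro j h1 h2 h3
    rcases Nat.lt_or_ge (j + 1) (b + 1) with hlt | hge
    · -- c (b+1) commutes with c j
      rw [ascProd_concat c (by omega : 1 ≤ b + 1)]
      have hc : c (b + 1) * c j = c j * c (b + 1) :=
        comm (b + 1) j (by omega) (by omega) h1 (by omega) (Or.inr (by omega))
      rw [mul_assoc, hc, ← mul_assoc, ih j h1 (by omega) (by omega), mul_assoc]
    · -- j = b
      have hj : j = b := by omega
      subst hj
      have e0 : ascProd c 1 (j - 1) * c j = ascProd c 1 j := by
        have e := ascProd_concat c (a := 1) (b := j - 1) (by omega)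
        rw [show j - 1 + 1 = j by omega] at e
        exact e.symm
      rw [ascProd_concat c (by omega : 1 ≤ j + 1), ← e0]
      have hcomm : c (j + 1) * ascProd c 1 (j - 1) = ascProd c 1 (j - 1) * c (j + 1) := by
        refine (Commute.list_prod_right _ _ fun y hy => ?_).eq
        obtain ⟨i, hi, rfl⟩ := List.mem_map.1 hy
        rw [List.mem_range'_1] at hi
        exact comm (j + 1) i (by omega) (by omega) (by omega) (by omega) (Or.inr (by omega))
      have braid' : c j * (c (j + 1) * c j) = c (j + 1) * (c j * c (j + 1)) := by
        rw [← mul_assoc, braid j h1 (by omega), mul_assoc]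
      simp only [mul_assoc]
      rw [braid', ← mul_assoc (ascProd c 1 (j - 1)) (c (j + 1)), ← hcomm, mul_assoc]

include braid comm in
lemma blockshift_lemma : ∀ ℓ a, 2 ≤ a → a + ℓ ≤ 2 * h + 2 →
    ascProd c a (a + ℓ - 1) * ascProd c 1 (2 * h + 1) =
      ascProd c 1 (2 * h + 1) * ascProd c (a - 1) (a + ℓ - 2) := by
  intro ℓ
  induction ℓ with
  | zero =>
    intro a ha hb
    have e1 : ascProd c a (a + 0 - 1) = 1 := by
      unfold ascProd; rw [show a + 0 - 1 + 1 - a = 0 by omega]; simp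
    have e2 : ascProd c (a - 1) (a + 0 - 2) = 1 := by
      unfold ascProd; rw [show a + 0 - 2 + 1 - (a - 1) = 0 by omega]; simp
    rw [e1, e2, one_mul, mul_one]
  | succ ℓ ih =>
    intro a ha hb
    have e1 : ascProd c a (a + (ℓ + 1) - 1) = ascProd c a (a + ℓ - 1) * c (a + ℓ) := by
      have e := ascProd_concat c (a := a) (b := a + ℓ - 1) (by omega)
      rw [show a + ℓ - 1 + 1 = a + ℓ by omega] at e
      rw [show a + (ℓ + 1) - 1 = a + ℓ by omega, e]
    have e2 : c (a + ℓ) * ascProd c 1 (2 * h + 1) =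
        ascProd c 1 (2 * h + 1) * c (a + ℓ - 1) := by
      have e := shift_lemma h c braid comm (2 * h + 1) (a + ℓ - 1) (by omega) (by omega)
        (le_refl _)
      rw [show a + ℓ - 1 + 1 = a + ℓ by omega] at e
      exact e.symm
    have e3 : ascProd c (a - 1) (a + ℓ - 2) * c (a + ℓ - 1) =
        ascProd c (a - 1) (a + (ℓ + 1) - 2) := by
      have e := ascProd_concat c (a := a - 1) (b := a + ℓ - 2) (by omega)
      rw [show a + ℓ - 2 + 1 = a + ℓ - 1 by omega] at e
      rw [show a + (ℓ + 1) - 2 = a + ℓ - 1 by omega, e]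
    rw [e1, mul_assoc, e2, ← mul_assoc, ih a ha (by omega), mul_assoc, e3]

end Aux

/-- with `b₀ = (c₁⋯c_{2h}) c_{2h+1} (c₁⋯c_{2h})⁻¹`, for `1 ≤ m ≤ h-1`,
`(c_{2m+2}⋯c_{2h+1})(c_{2m}⋯c₁) b₀ (c_{2h+1}⋯c_{2m+2})(c₁⋯c_{2m}) c_{2m+1}
  = (c_{2m}⋯c₁)(c₁⋯c_{2h+1})(c_{2h+1}⋯c_{2m+1})`. -/
theorem stmt0 {G : Type*} [Group G] (h : ℕ) (hh : 2 ≤ h) (c : ℕ → G)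
    (braid : ∀ j, 1 ≤ j → j ≤ 2 * h → c j * c (j + 1) * c j = c (j + 1) * c j * c (j + 1))
    (comm : ∀ j l, 1 ≤ j → j ≤ 2 * h + 1 → 1 ≤ l → l ≤ 2 * h + 1 →
      (j + 2 ≤ l ∨ l + 2 ≤ j) → c j * c l = c l * c j)
    (b₀ : G) (hb₀ : b₀ = ascProd c 1 (2 * h) * c (2 * h + 1) * (ascProd c 1 (2 * h))⁻¹) :
    ∀ m, 1 ≤ m → m ≤ h - 1 →
      ascProd c (2 * m + 2) (2 * h + 1) * descProd c 1 (2 * m) * b₀ *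
          descProd c (2 * m + 2) (2 * h + 1) * ascProd c 1 (2 * m) * c (2 * m + 1) =
        descProd c 1 (2 * m) * ascProd c 1 (2 * h + 1) *
          descProd c (2 * m + 1) (2 * h + 1) := by
  intro m hm1 hm2
  have hmh : m + 1 ≤ h := by omega
  -- b₀ = δ * Q⁻¹ with δ = ascProd c 1 (2h+1), Q = ascProd c 1 (2h)
  have hF1 : ascProd c 1 (2 * h) * c (2 * h + 1) = ascProd c 1 (2 * h + 1) :=
    (ascProd_concat c (by omega : 1 ≤ 2 * h + 1)).symm
  have hb₀' : b₀ = ascProd c 1 (2 * h + 1) * (ascProd c 1 (2 * h))⁻¹ := by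
    rw [hb₀, hF1]
  -- Q = P * U'  where P = ascProd c 1 (2m), U' = ascProd c (2m+1) (2h)
  have hPQ : ascProd c 1 (2 * m) * ascProd c (2 * m + 1) (2 * h) = ascProd c 1 (2 * h) :=
    ascProd_append c (by omega) (by omega)
  -- U * δ = δ * U'
  have hUδ : ascProd c (2 * m + 2) (2 * h + 1) * ascProd c 1 (2 * h + 1) =
      ascProd c 1 (2 * h + 1) * ascProd c (2 * m + 1) (2 * h) := by
    have e := blockshift_lemma h c braid comm (2 * h - 2 * m) (2 * m + 2) (by omega) (by omega)
    rw [show 2 * m + 2 + (2 * h - 2 * m) - 1 = 2 * h + 1 by omega,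
      show 2 * m + 2 - 1 = 2 * m + 1 by omega,
      show 2 * m + 2 + (2 * h - 2 * m) - 2 = 2 * h by omega] at e
    exact e
  -- U commutes with V
  have hUV : ascProd c (2 * m + 2) (2 * h + 1) * descProd c 1 (2 * m) =
      descProd c 1 (2 * m) * ascProd c (2 * m + 2) (2 * h + 1) := by
    unfold ascProd descProd
    apply commute_lists
    intro x hx y hy
    rw [List.mem_range'_1] at hx
    rw [List.mem_reverse, List.mem_range'_1] at hy
    exact comm x y (by omega) (by omega) (by omega) (by omega) (Or.inr (by omega))
  -- W commutes with P
  have hWP : descProd c (2 * m + 2) (2 * h + 1) * ascProd c 1 (2 * m) =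
      ascProd c 1 (2 * m) * descProd c (2 * m + 2) (2 * h + 1) := by
    unfold ascProd descProd
    apply commute_lists
    intro x hx y hy
    rw [List.mem_reverse, List.mem_range'_1] at hx
    rw [List.mem_range'_1] at hy
    exact comm x y (by omega) (by omega) (by omega) (by omega) (Or.inr (by omega))
  -- D(2m+1, 2h+1) = W * c (2m+1)
  have hD : descProd c (2 * m + 1) (2 * h + 1) =
      descProd c (2 * m + 2) (2 * h + 1) * c (2 * m + 1) := by
    have e := descProd_cons c (a := 2 * m + 1) (b := 2 * h + 1) (by omega)
    rw [show 2 * m + 1 + 1 = 2 * m + 2 by omega] at e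
    exact e
  rw [hb₀', hD, ← hPQ]
  exact abstract_identity _ _ _ _ _ _ (c (2 * m + 1)) hUV hUδ hWP
end

section
/- For every integer m with 1 ≤ m ≤ h−1, the product (c₁c₂⋯c_{2h}c_{2h+1}) · (c_{2h}⁻¹c_{2h−1}⁻¹⋯c_{2m+2}⁻¹c_{2m+1}⁻¹) is equal to (c_{2h+1}⁻¹c_{2h}⁻¹⋯c_{2m+2}⁻¹) · (c₁c₂⋯c_{2h}c_{2h+1}). -/
/-- Auxiliary block product of length `n` starting at `a`. -/
def blk {G : Type*} [Group G] (c : ℕ → G) (a n : ℕ) : G :=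
  ((List.range' a n).map c).prod

lemma blk_append {G : Type*} [Group G] (c : ℕ → G) (a m n : ℕ) :
    blk c a (m + n) = blk c a m * blk c (a + m) n := by
  unfold blk
  rw [← List.range'_append_1, List.map_append,
    List.prod_append]

lemma blk_one {G : Type*} [Group G] (c : ℕ → G) (a : ℕ) : blk c a 1 = c a := by
  simp [blk]

lemma blk_succ {G : Type*} [Group G] (c : ℕ → G) (a n : ℕ) :
    blk c a (n + 1) = c a * blk c (a + 1) n := by
  rw [show n + 1 = 1 + n from Nat.add_comm n 1, blk_append, blk_one]

lemma ascProd_eq_blk {G : Type*} [Group G] (c : ℕ → G) (a b : ℕ) :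
    ascProd c a b = blk c a (b + 1 - a) := rfl

lemma commute_blk {G : Type*} [Group G] (c : ℕ → G) (x : G) (a n : ℕ)
    (hx : ∀ i, a ≤ i → i < a + n → Commute x (c i)) : Commute x (blk c a n) := by
  apply Commute.list_prod_right
  intro y hy
  simp only [List.mem_map, List.mem_range'_1] at hy
  obtain ⟨i, ⟨h1, h2⟩, rfl⟩ := hy
  exact hx i h1 h2

/-- The key shift lemma: conjugation by the full chain product shifts generators. -/
lemma shift {G : Type*} [Group G] (h : ℕ) (c : ℕ → G)
    (braid : ∀ j, 1 ≤ j → j ≤ 2 * h → c j * c (j + 1) * c j = c (j + 1) * c j * c (j + 1))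
    (comm : ∀ j l, 1 ≤ j → j ≤ 2 * h + 1 → 1 ≤ l → l ≤ 2 * h + 1 →
      (j + 2 ≤ l ∨ l + 2 ≤ j) → c j * c l = c l * c j)
    (j : ℕ) (hj1 : 1 ≤ j) (hj2 : j ≤ 2 * h) :
    c (j + 1) * blk c 1 (2 * h + 1) = blk c 1 (2 * h + 1) * c j := by
  have hsplit : blk c 1 (2 * h + 1) =
      blk c 1 (j - 1) * (c j * c (j + 1)) * blk c (j + 2) (2 * h - j) := by
    have h1 : 2 * h + 1 = (j - 1) + (2 + (2 * h - j)) := by omega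
    rw [h1, blk_append, blk_append]
    have h2 : 1 + (j - 1) = j := by omega
    have h3 : blk c j 2 = c j * c (j + 1) := by
      rw [show (2:ℕ) = 1 + 1 from rfl, blk_append, blk_one, blk_one]
    rw [h2, h3, ← mul_assoc]
  have hc1 : Commute (c (j + 1)) (blk c 1 (j - 1)) := by
    apply commute_blk
    intro i hi1 hi2
    exact comm (j + 1) i (by omega) (by omega) hi1 (by omega) (by omega)
  have hc2 : Commute (c j) (blk c (j + 2) (2 * h - j)) := by
    apply commute_blk
    intro i hi1 hi2
    exact comm j i hj1 (by omega) (by omega) (by omega) (by omega)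
  calc c (j + 1) * blk c 1 (2 * h + 1)
      = c (j + 1) * (blk c 1 (j - 1) * (c j * c (j + 1)) * blk c (j + 2) (2 * h - j)) := by
        rw [hsplit]
    _ = blk c 1 (j - 1) * (c (j + 1) * c j * c (j + 1)) * blk c (j + 2) (2 * h - j) := by
        rw [← mul_assoc, ← mul_assoc, hc1.eq]
        group
    _ = blk c 1 (j - 1) * (c j * c (j + 1) * c j) * blk c (j + 2) (2 * h - j) := by
        rw [braid j hj1 hj2]
    _ = blk c 1 (j - 1) * (c j * c (j + 1)) * (c j * blk c (j + 2) (2 * h - j)) := by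
        group
    _ = blk c 1 (j - 1) * (c j * c (j + 1)) * blk c (j + 2) (2 * h - j) * c j := by
        rw [hc2.eq]; group
    _ = blk c 1 (2 * h + 1) * c j := by rw [hsplit]

/-- Iterated shift for a block of generators. -/
lemma shift_blk {G : Type*} [Group G] (h : ℕ) (c : ℕ → G)
    (braid : ∀ j, 1 ≤ j → j ≤ 2 * h → c j * c (j + 1) * c j = c (j + 1) * c j * c (j + 1))
    (comm : ∀ j l, 1 ≤ j → j ≤ 2 * h + 1 → 1 ≤ l → l ≤ 2 * h + 1 →
      (j + 2 ≤ l ∨ l + 2 ≤ j) → c j * c l = c l * c j) :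
    ∀ n a, 1 ≤ a → a + n ≤ 2 * h + 1 →
      blk c (a + 1) n * blk c 1 (2 * h + 1) = blk c 1 (2 * h + 1) * blk c a n := by
  intro n
  induction n with
  | zero => intro a _ _; simp [blk]
  | succ k ih =>
      intro a ha1 ha2
      rw [blk_succ, blk_succ c a k, mul_assoc,
        ih (a + 1) (by omega) (by omega), ← mul_assoc,
        shift h c braid comm a ha1 (by omega)]
      group

/-- for `1 ≤ m ≤ h-1`,
`(c₁⋯c_{2h+1})(c_{2h}⁻¹⋯c_{2m+1}⁻¹) = (c_{2h+1}⁻¹⋯c_{2m+2}⁻¹)(c₁⋯c_{2h+1})`. -/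
theorem stmt2 {G : Type*} [Group G] (h : ℕ) (hh : 2 ≤ h) (c : ℕ → G)
    (braid : ∀ j, 1 ≤ j → j ≤ 2 * h → c j * c (j + 1) * c j = c (j + 1) * c j * c (j + 1))
    (comm : ∀ j l, 1 ≤ j → j ≤ 2 * h + 1 → 1 ≤ l → l ≤ 2 * h + 1 →
      (j + 2 ≤ l ∨ l + 2 ≤ j) → c j * c l = c l * c j) :
    ∀ m, 1 ≤ m → m ≤ h - 1 →
      ascProd c 1 (2 * h + 1) * (ascProd c (2 * m + 1) (2 * h))⁻¹ =
        (ascProd c (2 * m + 2) (2 * h + 1))⁻¹ * ascProd c 1 (2 * h + 1) := by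
  intro m hm1 hm2
  rw [ascProd_eq_blk, ascProd_eq_blk, ascProd_eq_blk]
  have e1 : 2 * h + 1 + 1 - 1 = 2 * h + 1 := by omega
  have e2 : 2 * h + 1 - (2 * m + 1) = 2 * h - 2 * m := by omega
  have e3 : 2 * h + 1 + 1 - (2 * m + 2) = 2 * h - 2 * m := by omega
  rw [e1, e2, e3]
  have key := shift_blk h c braid comm (2 * h - 2 * m) (2 * m + 1) (by omega) (by omega)
  rw [show 2 * m + 1 + 1 = 2 * m + 2 from rfl] at key
  rw [eq_comm, inv_mul_eq_iff_eq_mul, ← mul_assoc, key]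
  group
end

section
/- Let ι = (c₁c₂⋯c_{2h+1}) · (c_{2h+1}c_{2h}⋯c₂c₁), and suppose that ι commutes with each c_j for 1 ≤ j ≤ 2h+1. Then for every integer m with 1 ≤ m ≤ h−1, the element W = (c_{2m}c_{2m−1}⋯c₁) · (c₁c₂⋯c_{2h+1}) · (c_{2h+1}c_{2h}⋯c_{2m+1}) satisfies W² = ι · W. -/
lemma descProd_split {G : Type*} [Group G] (c : ℕ → G) (a k b : ℕ)
    (h1 : a ≤ k + 1) (h2 : k ≤ b) :
    descProd c (k + 1) b * descProd c a k = descProd c a b := by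
  unfold descProd
  rw [← List.prod_append, ← List.map_append, ← List.reverse_append]
  congr 3
  have hn : b + 1 - a = (k + 1 - a) + (b - k) := by omega
  have hs : a + 1 * (k + 1 - a) = k + 1 := by omega
  have hb : b + 1 - (k + 1) = b - k := by omega
  rw [hn, hb, ← List.range'_append, hs]

lemma comm_prod {G : Type*} [Group G] (ι : G) (c : ℕ → G) :
    ∀ l : List ℕ, (∀ x ∈ l, ι * c x = c x * ι) →
      ι * (l.map c).prod = (l.map c).prod * ι := by
  intro l
  induction l with
  | nil => simp
  | cons a t ih =>
    intro hmem
    simp only [List.map_cons, List.prod_cons, ← mul_assoc]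
    rw [hmem a (by simp), mul_assoc, ih (fun x hx => hmem x (by simp [hx])),
      ← mul_assoc]

/-- if `ι = (c₁⋯c_{2h+1})(c_{2h+1}⋯c₁)` commutes with each `c_j`, then for
`1 ≤ m ≤ h-1` the element `W = (c_{2m}⋯c₁)(c₁⋯c_{2h+1})(c_{2h+1}⋯c_{2m+1})`
satisfies `W² = ι·W`. -/
theorem stmt3 {G : Type*} [Group G] (h : ℕ) (hh : 2 ≤ h) (c : ℕ → G)
    (ι : G) (hι : ι = ascProd c 1 (2 * h + 1) * descProd c 1 (2 * h + 1))
    (hcomm : ∀ j, 1 ≤ j → j ≤ 2 * h + 1 → ι * c j = c j * ι) :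
    ∀ m, 1 ≤ m → m ≤ h - 1 →
      ∀ W : G, W = descProd c 1 (2 * m) * ascProd c 1 (2 * h + 1) *
          descProd c (2 * m + 1) (2 * h + 1) →
        W ^ 2 = ι * W := by
  intro m hm1 hm2 W hW
  have hsplit : descProd c (2 * m + 1) (2 * h + 1) * descProd c 1 (2 * m) =
      descProd c 1 (2 * h + 1) := descProd_split c 1 (2 * m) (2 * h + 1)
    (by omega) (by omega)
  have hcommD : ι * descProd c 1 (2 * m) = descProd c 1 (2 * m) * ι := by
    unfold descProd
    apply comm_prod
    intro x hx
    rw [List.mem_reverse, List.mem_range'_1] at hx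
    exact hcomm x (by omega) (by omega)
  rw [hW, sq]
  calc (descProd c 1 (2 * m) * ascProd c 1 (2 * h + 1) *
          descProd c (2 * m + 1) (2 * h + 1)) *
        (descProd c 1 (2 * m) * ascProd c 1 (2 * h + 1) *
          descProd c (2 * m + 1) (2 * h + 1))
      = descProd c 1 (2 * m) * ascProd c 1 (2 * h + 1) *
        (descProd c (2 * m + 1) (2 * h + 1) * descProd c 1 (2 * m)) *
        ascProd c 1 (2 * h + 1) * descProd c (2 * m + 1) (2 * h + 1) := by
        group
    _ = descProd c 1 (2 * m) * (ascProd c 1 (2 * h + 1) *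
        descProd c 1 (2 * h + 1)) *
        ascProd c 1 (2 * h + 1) * descProd c (2 * m + 1) (2 * h + 1) := by
        rw [hsplit]; group
    _ = descProd c 1 (2 * m) * ι *
        ascProd c 1 (2 * h + 1) * descProd c (2 * m + 1) (2 * h + 1) := by
        rw [← hι]
    _ = ι * (descProd c 1 (2 * m) * ascProd c 1 (2 * h + 1) *
        descProd c (2 * m + 1) (2 * h + 1)) := by
        rw [← hcommD]; group
end
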